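/- Consider the dataset in ℝ² with a₁ = (1, −1), y₁ = 1 and a₂ = (−1, −4), y₂ = −1, and the gradient descent iterates θ₀ = 0, θ_{t+1} = θ_t − γ ∇f(θ_t) with step size γ > 0. Then θ₂/γ → (1, 1/4) as γ → ∞, the limit point (1, 1/4) solves the classification task (y₁ a₁ᵀ(1,1/4) > 0 and y₂ a₂ᵀ(1,1/4) > 0), and f(θ₂) → 0 as γ → ∞. -/

import Mathlib

noncomputable section

/-- The Euclidean dot product on `ℝ²`. -/
def dot2 (u v : ℝ × ℝ) : ℝ := u.1 * v.1 + u.2 * v.2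

/-- First sample `a₁ = (1, −1)`, with label `y₁ = 1`. -/
def a1 : ℝ × ℝ := (1, -1)
/-- Second sample `a₂ = (−1, −4)`, with label `y₂ = −1`. -/
def a2 : ℝ × ℝ := (-1, -4)
def y1 : ℝ := 1
def y2 : ℝ := -1

/-- The logistic loss for this two-sample dataset. -/
def floss (θ : ℝ × ℝ) : ℝ :=
  (1 / 2) * (Real.log (1 + Real.exp (-(y1 * dot2 a1 θ)))
    + Real.log (1 + Real.exp (-(y2 * dot2 a2 θ))))

/-- The gradient of the logistic loss for this two-sample dataset. -/
def gradf (θ : ℝ × ℝ) : ℝ × ℝ :=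
  -((1 / 2 : ℝ) • ((1 + Real.exp (y1 * dot2 a1 θ))⁻¹ • (y1 • a1)
    + (1 + Real.exp (y2 * dot2 a2 θ))⁻¹ • (y2 • a2)))

/-- The LR+GD iterates `θ₀ = 0`, `θ_{t+1} = θ_t − γ ∇f(θ_t)`. -/
def gdIter (γ : ℝ) : ℕ → ℝ × ℝ
  | 0 => 0
  | t + 1 => gdIter γ t - γ • gradf (gdIter γ t)

/-- Abbreviation for the first sigmoid-type factor. -/
def Afac (γ : ℝ) : ℝ := (1 + Real.exp (-(γ/4)))⁻¹
/-- Abbreviation for the second sigmoid-type factor. -/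
def Bfac (γ : ℝ) : ℝ := (1 + Real.exp (7*γ/2))⁻¹

lemma gd1 (γ : ℝ) : gdIter γ 1 = (γ/2, 3*γ/4) := by
  show (0:ℝ×ℝ) - γ • gradf 0 = _
  simp [gradf, dot2, a1, a2, y1, y2, Prod.ext_iff, Real.exp_zero]
  constructor <;> ring

lemma gd2 (γ : ℝ) : gdIter γ 2 =
    (γ*(1/2 + Afac γ/2 + Bfac γ/2), γ*(3/4 - Afac γ/2 + 2*Bfac γ)) := by
  have h : gdIter γ 2 = gdIter γ 1 - γ • gradf (gdIter γ 1) := rfl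
  rw [h, gd1]
  have h1 : y1 * dot2 a1 (γ/2, 3*γ/4) = -(γ/4) := by simp [dot2, a1, y1]; ring
  have h2 : y2 * dot2 a2 (γ/2, 3*γ/4) = 7*γ/2 := by simp [dot2, a2, y2]; ring
  simp only [gradf, h1, h2, a1, a2, y1, y2, Afac, Bfac, Prod.ext_iff]
  simp [Prod.ext_iff, dot2]
  constructor <;> ring_nf

lemma hA : Filter.Tendsto Afac Filter.atTop (nhds 1) := by
  have he : Filter.Tendsto (fun γ : ℝ => Real.exp (-(γ/4))) Filter.atTop (nhds 0) := by
    apply Real.tendsto_exp_atBot.comp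
    exact Filter.tendsto_neg_atTop_atBot.comp (Filter.Tendsto.atTop_div_const (by norm_num) Filter.tendsto_id)
  have := ((tendsto_const_nhds.add he).inv₀ (by norm_num : (1:ℝ) + 0 ≠ 0))
  unfold Afac
  simpa using this

lemma hB : Filter.Tendsto Bfac Filter.atTop (nhds 0) := by
  apply tendsto_inv_atTop_zero.comp
  apply Filter.tendsto_atTop_add_const_left _ 1
  have : Filter.Tendsto (fun γ : ℝ => 7*γ/2) Filter.atTop Filter.atTop := by
    apply Filter.Tendsto.atTop_div_const (by norm_num)
    exact Filter.Tendsto.const_mul_atTop (by norm_num) Filter.tendsto_id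
  exact Real.tendsto_exp_atTop.comp this

lemma loglim {g : ℝ → ℝ} (h : Filter.Tendsto g Filter.atTop Filter.atTop) :
    Filter.Tendsto (fun γ => Real.log (1 + Real.exp (-(g γ)))) Filter.atTop (nhds 0) := by
  have h1 : Filter.Tendsto (fun γ => Real.exp (-(g γ))) Filter.atTop (nhds 0) :=
    Real.tendsto_exp_atBot.comp (Filter.tendsto_neg_atTop_atBot.comp h)
  have h2 : Filter.Tendsto (fun γ => (1:ℝ) + Real.exp (-(g γ))) Filter.atTop (nhds 1) := by
    simpa using tendsto_const_nhds.add h1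
  have := ((Real.continuousAt_log (by norm_num : (1:ℝ) ≠ 0)).tendsto).comp h2
  simpa [Function.comp_def] using this

/-- For the dataset `a₁ = (1,−1), y₁ = 1`, `a₂ = (−1,−4), y₂ = −1`:
`θ₂/γ → (1, 1/4)` as `γ → ∞`, the limit point `(1, 1/4)` solves the classification task,
and `f(θ₂) → 0` as `γ → ∞`. -/
theorem lr_gd_second_iterate_solves :
    Filter.Tendsto (fun γ : ℝ => γ⁻¹ • gdIter γ 2) Filter.atTop
      (nhds ((1 : ℝ), (1 / 4 : ℝ))) ∧
    (0 < y1 * dot2 a1 ((1 : ℝ), (1 / 4 : ℝ)) ∧ 0 < y2 * dot2 a2 ((1 : ℝ), (1 / 4 : ℝ))) ∧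
    Filter.Tendsto (fun γ : ℝ => floss (gdIter γ 2)) Filter.atTop (nhds 0) := by
  refine ⟨?_, ⟨by norm_num [dot2, a1, y1], by norm_num [dot2, a2, y2]⟩, ?_⟩
  · have heq : ∀ᶠ γ : ℝ in Filter.atTop,
        (fun γ : ℝ => ((1:ℝ)/2 + Afac γ/2 + Bfac γ/2, (3:ℝ)/4 - Afac γ/2 + 2*Bfac γ)) γ
          = γ⁻¹ • gdIter γ 2 := by
      filter_upwards [Filter.eventually_gt_atTop (0:ℝ)] with γ hγ
      rw [gd2]
      have hγ' : γ ≠ 0 := ne_of_gt hγ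
      simp [Prod.ext_iff, Prod.smul_def]
      constructor <;> field_simp <;> ring
    refine Filter.Tendsto.congr' heq ?_
    have t1 : Filter.Tendsto (fun γ : ℝ => (1:ℝ)/2 + Afac γ/2 + Bfac γ/2)
        Filter.atTop (nhds 1) := by
      have h : Filter.Tendsto (fun γ : ℝ => (1:ℝ)/2 + Afac γ/2 + Bfac γ/2)
          Filter.atTop (nhds ((1:ℝ)/2 + 1/2 + 0/2)) :=
        (tendsto_const_nhds.add (hA.div_const 2)).add (hB.div_const 2)
      norm_num at h; exact h
    have t2 : Filter.Tendsto (fun γ : ℝ => (3:ℝ)/4 - Afac γ/2 + 2*Bfac γ)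
        Filter.atTop (nhds (1/4)) := by
      have h : Filter.Tendsto (fun γ : ℝ => (3:ℝ)/4 - Afac γ/2 + 2*Bfac γ)
          Filter.atTop (nhds ((3:ℝ)/4 - 1/2 + 2*0)) :=
        (tendsto_const_nhds.sub (hA.div_const 2)).add (hB.const_mul 2)
      norm_num at h; exact h
    exact t1.prodMk_nhds t2
  · have hc1 : ∀ γ : ℝ, y1 * dot2 a1 (gdIter γ 2) = γ * (-(1:ℝ)/4 + Afac γ - 3*Bfac γ/2) := by
      intro γ; rw [gd2]; simp [dot2, a1, y1]; ring
    have hc2 : ∀ γ : ℝ, y2 * dot2 a2 (gdIter γ 2) = γ * ((7:ℝ)/2 - 3*Afac γ/2 + 17*Bfac γ/2) := by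
      intro γ; rw [gd2]; simp [dot2, a2, y2]; ring
    have hg1 : Filter.Tendsto (fun γ : ℝ => γ * (-(1:ℝ)/4 + Afac γ - 3*Bfac γ/2))
        Filter.atTop Filter.atTop := by
      refine Filter.Tendsto.atTop_mul_pos (C := 3/4) (by norm_num) Filter.tendsto_id ?_
      have h : Filter.Tendsto (fun γ : ℝ => -(1:ℝ)/4 + Afac γ - 3*Bfac γ/2)
          Filter.atTop (nhds (-(1:ℝ)/4 + 1 - 3*0/2)) :=
        (tendsto_const_nhds.add hA).sub ((hB.const_mul 3).div_const 2)
      norm_num at h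
      exact h.congr (fun γ => by ring_nf)
    have hg2 : Filter.Tendsto (fun γ : ℝ => γ * ((7:ℝ)/2 - 3*Afac γ/2 + 17*Bfac γ/2))
        Filter.atTop Filter.atTop := by
      refine Filter.Tendsto.atTop_mul_pos (C := 2) (by norm_num) Filter.tendsto_id ?_
      have h : Filter.Tendsto (fun γ : ℝ => (7:ℝ)/2 - 3*Afac γ/2 + 17*Bfac γ/2)
          Filter.atTop (nhds ((7:ℝ)/2 - 3*1/2 + 17*0/2)) :=
        (tendsto_const_nhds.sub ((hA.const_mul 3).div_const 2)).add
          ((hB.const_mul 17).div_const 2)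
      norm_num at h
      exact h.congr (fun γ => by ring_nf)
    have l1 := loglim hg1
    have l2 := loglim hg2
    have : Filter.Tendsto (fun γ : ℝ => floss (gdIter γ 2)) Filter.atTop (nhds ((1/2)*(0+0))) := by
      apply Filter.Tendsto.const_mul
      refine Filter.Tendsto.add ?_ ?_
      · exact Filter.Tendsto.congr (fun γ => by rw [hc1 γ]) l1
      · exact Filter.Tendsto.congr (fun γ => by rw [hc2 γ]) l2
    simpa using this

end
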